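/- Let t ≥ 3 and let F be the graph with vertex set {u, v, x₁, …, x_{2t-1}} and edge set {u x_s : s ∈ [2t-1]} ∪ {v x_k : k ∈ [t]} (so F ≅ K_{2,t}(t-1)). Then adding any single edge e among the edges v x_j with j ∈ [2t-1] \ [t] to F produces a graph containing a copy of K_{2,t+1}(t-2). -/
import Mathlib


open SimpleGraph Sum

/-- Vertex type of `K_{2,t}(s)`: two core vertices `a₁,a₂`, vertices `b₁,…,b_t`,
and pendant vertices `c₁,…,c_s`. -/
abbrev K2tsVert (t s : ℕ) : Type := Fin 2 ⊕ (Fin t ⊕ Fin s)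

/-- The graph `K_{2,t}(s)`: complete bipartite graph between `{a₁,a₂}` and `{b₁,…,b_t}`,
together with `s` pendant edges `a₁c₁,…,a₁c_s`. -/
def K2ts (t s : ℕ) : SimpleGraph (K2tsVert t s) :=
  SimpleGraph.fromRel (fun x y =>
    (∃ i j, x = inl i ∧ y = inr (inl j)) ∨
    (x = inl 0 ∧ ∃ k, y = inr (inr k)))

/-- The graph `F ≅ K_{2,t}(t-1)` on vertices `u = inl 0`, `v = inl 1`,
`x₁,…,x_{2t-1}`, with edges `u xₛ` for all `s ∈ [2t-1]` and `v x_k` for `k ∈ [t]`. -/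
def starPlus (t : ℕ) : SimpleGraph (Fin 2 ⊕ Fin (2 * t - 1)) :=
  SimpleGraph.fromRel (fun x y =>
    (x = inl 0 ∧ ∃ j, y = inr j) ∨
    (x = inl 1 ∧ ∃ j : Fin (2 * t - 1), (j : ℕ) < t ∧ y = inr j))

/-- For `t ≥ 3`, adding to `F ≅ K_{2,t}(t-1)` any single edge `v x_j` with
`j ∈ [2t-1] \ [t]` produces a graph containing a copy of `K_{2,t+1}(t-2)`. -/
theorem adding_edge_creates_copy (t : ℕ) (ht : 3 ≤ t) (j : Fin (2 * t - 1))
    (hj : t ≤ (j : ℕ)) :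
    ∃ f : K2ts (t + 1) (t - 2) →g
        (starPlus t ⊔ SimpleGraph.fromEdgeSet {s(inl 1, inr j)}),
      Function.Injective f := by
  have hjlt : (j : ℕ) < 2 * t - 1 := j.isLt
  set G := starPlus t ⊔ SimpleGraph.fromEdgeSet {s(inl 1, inr j)} with hG
  -- the vertex map
  let F : K2tsVert (t + 1) (t - 2) → Fin 2 ⊕ Fin (2 * t - 1) := fun x =>
    match x with
    | inl i => inl i
    | inr (inl b) => inr ⟨if (b : ℕ) < t then (b : ℕ) else (j : ℕ),
        by split <;> omega⟩
    | inr (inr c) => inr ⟨if t + (c : ℕ) < (j : ℕ) then t + (c : ℕ) else t + (c : ℕ) + 1,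
        by have := c.isLt; split <;> omega⟩
  -- u is adjacent to everything on the right
  have hu : ∀ m : Fin (2 * t - 1), G.Adj (inl 0) (inr m) := fun m =>
    Or.inl ⟨by simp, Or.inl (Or.inl ⟨rfl, m, rfl⟩)⟩
  have hv : ∀ m : Fin (2 * t - 1), ((m : ℕ) < t ∨ m = j) → G.Adj (inl 1) (inr m) := by
    intro m hm
    rcases hm with hm | rfl
    · exact Or.inl ⟨by simp, Or.inl (Or.inr ⟨rfl, m, hm, rfl⟩)⟩
    · exact Or.inr (by simp)
  have hbval : ∀ b : Fin (t + 1),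
      (if (b : ℕ) < t then (b : ℕ) else (j : ℕ)) < t ∨
      (⟨if (b : ℕ) < t then (b : ℕ) else (j : ℕ), by split <;> omega⟩ : Fin (2 * t - 1)) = j := by
    intro b
    by_cases hb : (b : ℕ) < t
    · left; simp [hb]
    · right; ext; simp [hb]
  refine ⟨⟨F, ?_⟩, ?_⟩
  · intro a b hab
    obtain ⟨hne, h | h⟩ := hab
    · rcases h with ⟨i, b', rfl, rfl⟩ | ⟨rfl, k, rfl⟩
      · fin_cases i
        · exact hu _
        · refine hv _ ?_
          rcases hbval b' with h | h
          · left; exact h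
          · right; exact h
      · exact hu _
    · rcases h with ⟨i, b', rfl, rfl⟩ | ⟨rfl, k, rfl⟩
      · refine (?_ : G.Adj (inl i) _).symm
        fin_cases i
        · exact hu _
        · refine hv _ ?_
          rcases hbval b' with h | h
          · left; exact h
          · right; exact h
      · exact (hu _).symm
  · intro x y h
    change F x = F y at h
    match x, y with
    | inl i, inl i' => simpa [F] using h
    | inl i, inr (inl b) => simp [F] at h
    | inl i, inr (inr c) => simp [F] at h
    | inr (inl b), inl i => simp [F] at h
    | inr (inr c), inl i => simp [F] at h
    | inr (inl b), inr (inl b') =>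
      have hb := b.isLt; have hb' := b'.isLt
      simp only [F, inr.injEq, inl.injEq, Fin.mk.injEq] at h
      have : (b : ℕ) = (b' : ℕ) := by split_ifs at h <;> omega
      simp [Fin.ext_iff, this]
    | inr (inl b), inr (inr c) =>
      have hb := b.isLt; have hc := c.isLt
      simp only [F, inr.injEq, Fin.mk.injEq] at h
      exfalso; split_ifs at h <;> omega
    | inr (inr c), inr (inl b) =>
      have hb := b.isLt; have hc := c.isLt
      simp only [F, inr.injEq, Fin.mk.injEq] at h
      exfalso; split_ifs at h <;> omega
    | inr (inr c), inr (inr c') =>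
      have hc := c.isLt; have hc' := c'.isLt
      simp only [F, inr.injEq, Fin.mk.injEq] at h
      have : (c : ℕ) = (c' : ℕ) := by split_ifs at h <;> omega
      simp [Fin.ext_iff, this]
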